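/- Let d ≥ 1, let E ⊆ ℝ^d be a finite set with at least two points, and let P_E be a 1-field on E. Then Γ̃(P_E) ≤ Γ(P_E) ≤ 2(1 + √2)·Γ̃(P_E). -/

import Mathlib

open scoped RealInnerProductSpace

/-- The affine polynomial (first order jet) `P_u(z) = f(u) + ⟪g(u), z - u⟫`. -/
noncomputable def jet {d : ℕ} (f : EuclideanSpace ℝ (Fin d) → ℝ)
    (g : EuclideanSpace ℝ (Fin d) → EuclideanSpace ℝ (Fin d))
    (u z : EuclideanSpace ℝ (Fin d)) : ℝ :=
  f u + ⟪g u, z - u⟫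

/-- `A(x,y) = |P_x(x) - P_y(x) + P_x(y) - P_y(y)| / |x - y|²`. -/
noncomputable def funA {d : ℕ} (f : EuclideanSpace ℝ (Fin d) → ℝ)
    (g : EuclideanSpace ℝ (Fin d) → EuclideanSpace ℝ (Fin d))
    (x y : EuclideanSpace ℝ (Fin d)) : ℝ :=
  |jet f g x x - jet f g y x + jet f g x y - jet f g y y| / ‖x - y‖ ^ 2

/-- `B(x,y) = ‖g(x) - g(y)‖ / |x - y|`. -/
noncomputable def funB {d : ℕ}
    (g : EuclideanSpace ℝ (Fin d) → EuclideanSpace ℝ (Fin d))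
    (x y : EuclideanSpace ℝ (Fin d)) : ℝ :=
  ‖g x - g y‖ / ‖x - y‖

/-- `Ã(x,y) = |P_x(x) - P_y(x)| / |x - y|²`. -/
noncomputable def funAtilde {d : ℕ} (f : EuclideanSpace ℝ (Fin d) → ℝ)
    (g : EuclideanSpace ℝ (Fin d) → EuclideanSpace ℝ (Fin d))
    (x y : EuclideanSpace ℝ (Fin d)) : ℝ :=
  |jet f g x x - jet f g y x| / ‖x - y‖ ^ 2

/-- `Γ(P_E)`: max over distinct pairs of `√(A² + B²) + A`. -/
noncomputable def Gamma {d : ℕ} (E : Set (EuclideanSpace ℝ (Fin d)))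
    (f : EuclideanSpace ℝ (Fin d) → ℝ)
    (g : EuclideanSpace ℝ (Fin d) → EuclideanSpace ℝ (Fin d)) : ℝ :=
  sSup {t : ℝ | ∃ x ∈ E, ∃ y ∈ E, x ≠ y ∧
    t = Real.sqrt (funA f g x y ^ 2 + funB g x y ^ 2) + funA f g x y}

/-- `Γ'(P_E)`: max over distinct pairs of `max {A, B}`. -/
noncomputable def GammaPrime {d : ℕ} (E : Set (EuclideanSpace ℝ (Fin d)))
    (f : EuclideanSpace ℝ (Fin d) → ℝ)
    (g : EuclideanSpace ℝ (Fin d) → EuclideanSpace ℝ (Fin d)) : ℝ :=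
  sSup {t : ℝ | ∃ x ∈ E, ∃ y ∈ E, x ≠ y ∧ t = max (funA f g x y) (funB g x y)}

/-- `Γ̃(P_E)`: max over distinct pairs of `max {Ã, B}`. -/
noncomputable def GammaTilde {d : ℕ} (E : Set (EuclideanSpace ℝ (Fin d)))
    (f : EuclideanSpace ℝ (Fin d) → ℝ)
    (g : EuclideanSpace ℝ (Fin d) → EuclideanSpace ℝ (Fin d)) : ℝ :=
  sSup {t : ℝ | ∃ x ∈ E, ∃ y ∈ E, x ≠ y ∧ t = max (funAtilde f g x y) (funB g x y)}

section Aux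

open scoped RealInnerProductSpace

variable {d : ℕ} {f : EuclideanSpace ℝ (Fin d) → ℝ}
    {g : EuclideanSpace ℝ (Fin d) → EuclideanSpace ℝ (Fin d)}

lemma funA_nonneg' (x y : EuclideanSpace ℝ (Fin d)) : 0 ≤ funA f g x y :=
  div_nonneg (abs_nonneg _) (by positivity)

lemma funB_nonneg' (x y : EuclideanSpace ℝ (Fin d)) : 0 ≤ funB g x y :=
  div_nonneg (norm_nonneg _) (norm_nonneg _)

lemma funAtilde_nonneg' (x y : EuclideanSpace ℝ (Fin d)) : 0 ≤ funAtilde f g x y :=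
  div_nonneg (abs_nonneg _) (by positivity)

lemma funA_le_sum (x y : EuclideanSpace ℝ (Fin d)) :
    funA f g x y ≤ funAtilde f g x y + funAtilde f g y x := by
  unfold funA funAtilde
  rw [norm_sub_rev y x, ← add_div]
  gcongr
  rw [show jet f g x x - jet f g y x + jet f g x y - jet f g y y
      = (jet f g x x - jet f g y x) + (jet f g x y - jet f g y y) from by ring,
    abs_sub_comm (jet f g y y)]
  exact abs_add_le _ _

lemma two_funAtilde_le (x y : EuclideanSpace ℝ (Fin d)) (hxy : x ≠ y) :
    2 * funAtilde f g x y ≤ funA f g x y + funB g x y := by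
  have hr : (0:ℝ) < ‖x - y‖ := by
    rw [norm_pos_iff]; exact sub_ne_zero.mpr hxy
  have hab : jet f g x x - jet f g y x - (jet f g x y - jet f g y y)
      = ⟪g x - g y, x - y⟫ := by
    simp [jet, inner_sub_left, inner_sub_right, sub_self, inner_zero_right]
    ring
  have key : 2 * |jet f g x x - jet f g y x|
      ≤ |jet f g x x - jet f g y x + jet f g x y - jet f g y y|
        + ‖g x - g y‖ * ‖x - y‖ := by
    have h1 := abs_add_le (jet f g x x - jet f g y x + jet f g x y - jet f g y y)
      (⟪g x - g y, x - y⟫)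
    rw [← hab, show (jet f g x x - jet f g y x + jet f g x y - jet f g y y)
        + (jet f g x x - jet f g y x - (jet f g x y - jet f g y y))
        = 2 * (jet f g x x - jet f g y x) from by ring, abs_mul, abs_two] at h1
    have h2 := abs_real_inner_le_norm (g x - g y) (x - y)
    rw [← hab] at h2
    linarith
  have e1 : funB g x y = (‖g x - g y‖ * ‖x - y‖) / ‖x - y‖ ^ 2 := by
    unfold funB; field_simp
  unfold funA funAtilde
  rw [e1, ← add_div, ← mul_div_assoc]
  gcongr

end Aux

/-- `Γ̃(P_E) ≤ Γ(P_E) ≤ 2(1 + √2)·Γ̃(P_E)`. -/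
theorem statement3 {d : ℕ} (hd : 1 ≤ d) (E : Set (EuclideanSpace ℝ (Fin d)))
    (hE : E.Finite) (h2 : ∃ x ∈ E, ∃ y ∈ E, x ≠ y)
    (f : EuclideanSpace ℝ (Fin d) → ℝ)
    (g : EuclideanSpace ℝ (Fin d) → EuclideanSpace ℝ (Fin d)) :
    GammaTilde E f g ≤ Gamma E f g ∧
      Gamma E f g ≤ 2 * (1 + Real.sqrt 2) * GammaTilde E f g := by
  set S : Set ℝ := {t : ℝ | ∃ x ∈ E, ∃ y ∈ E, x ≠ y ∧
    t = Real.sqrt (funA f g x y ^ 2 + funB g x y ^ 2) + funA f g x y} with hS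
  set T : Set ℝ := {t : ℝ | ∃ x ∈ E, ∃ y ∈ E, x ≠ y ∧
    t = max (funAtilde f g x y) (funB g x y)} with hT
  have hSfin : S.Finite := by
    apply Set.Finite.subset (Set.Finite.image
      (fun p : EuclideanSpace ℝ (Fin d) × EuclideanSpace ℝ (Fin d) =>
        Real.sqrt (funA f g p.1 p.2 ^ 2 + funB g p.1 p.2 ^ 2) + funA f g p.1 p.2)
      (hE.prod hE))
    rintro t ⟨x, hx, y, hy, hxy, rfl⟩
    exact ⟨(x, y), ⟨hx, hy⟩, rfl⟩
  have hTfin : T.Finite := by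
    apply Set.Finite.subset (Set.Finite.image
      (fun p : EuclideanSpace ℝ (Fin d) × EuclideanSpace ℝ (Fin d) =>
        max (funAtilde f g p.1 p.2) (funB g p.1 p.2)) (hE.prod hE))
    rintro t ⟨x, hx, y, hy, hxy, rfl⟩
    exact ⟨(x, y), ⟨hx, hy⟩, rfl⟩
  obtain ⟨x₀, hx₀, y₀, hy₀, hxy₀⟩ := h2
  have hSne : S.Nonempty := ⟨_, x₀, hx₀, y₀, hy₀, hxy₀, rfl⟩
  have hTne : T.Nonempty := ⟨_, x₀, hx₀, y₀, hy₀, hxy₀, rfl⟩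
  have hSbdd : BddAbove S := hSfin.bddAbove
  have hTbdd : BddAbove T := hTfin.bddAbove
  have hBle : ∀ x ∈ E, ∀ y ∈ E, x ≠ y → funB g x y ≤ GammaTilde E f g := fun x hx y hy hxy =>
    le_trans (le_max_right _ _) (le_csSup hTbdd ⟨x, hx, y, hy, hxy, rfl⟩)
  have hAtle : ∀ x ∈ E, ∀ y ∈ E, x ≠ y → funAtilde f g x y ≤ GammaTilde E f g :=
    fun x hx y hy hxy =>
    le_trans (le_max_left _ _) (le_csSup hTbdd ⟨x, hx, y, hy, hxy, rfl⟩)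
  have hG0 : 0 ≤ GammaTilde E f g :=
    le_trans (le_trans (funB_nonneg' x₀ y₀) (le_max_right _ _))
      (le_csSup hTbdd ⟨x₀, hx₀, y₀, hy₀, hxy₀, rfl⟩)
  constructor
  · -- GammaTilde ≤ Gamma
    apply csSup_le hTne
    rintro t ⟨x, hx, y, hy, hxy, rfl⟩
    have hmem : Real.sqrt (funA f g x y ^ 2 + funB g x y ^ 2) + funA f g x y
        ≤ Gamma E f g := le_csSup hSbdd ⟨x, hx, y, hy, hxy, rfl⟩
    have hs0 := Real.sqrt_nonneg (funA f g x y ^ 2 + funB g x y ^ 2)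
    have hs2 : Real.sqrt (funA f g x y ^ 2 + funB g x y ^ 2) ^ 2
        = funA f g x y ^ 2 + funB g x y ^ 2 := Real.sq_sqrt (by positivity)
    have hA0 := funA_nonneg' (f := f) (g := g) x y
    have hB0 := funB_nonneg' (g := g) x y
    have h2At := two_funAtilde_le (f := f) (g := g) x y hxy
    have hBs : funB g x y ≤ Real.sqrt (funA f g x y ^ 2 + funB g x y ^ 2) := by
      nlinarith [sq_nonneg (Real.sqrt (funA f g x y ^ 2 + funB g x y ^ 2) + funB g x y)]
    refine le_trans (max_le ?_ ?_) hmem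
    · linarith
    · linarith
  · -- Gamma ≤ 2(1+√2) GammaTilde
    apply csSup_le hSne
    rintro t ⟨x, hx, y, hy, hxy, rfl⟩
    have hA2 : funA f g x y ≤ 2 * GammaTilde E f g := by
      have := funA_le_sum (f := f) (g := g) x y
      have h1 := hAtle x hx y hy hxy
      have h2 := hAtle y hy x hx hxy.symm
      linarith
    have hB1 := hBle x hx y hy hxy
    have hA0 := funA_nonneg' (f := f) (g := g) x y
    have hB0 := funB_nonneg' (g := g) x y
    have hsq : Real.sqrt (funA f g x y ^ 2 + funB g x y ^ 2)
        ≤ 2 * Real.sqrt 2 * GammaTilde E f g := by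
      have ht2 : Real.sqrt 2 ^ 2 = 2 := Real.sq_sqrt (by norm_num)
      have hc0 : (0:ℝ) ≤ 2 * Real.sqrt 2 * GammaTilde E f g := by positivity
      rw [show 2 * Real.sqrt 2 * GammaTilde E f g
          = Real.sqrt ((2 * Real.sqrt 2 * GammaTilde E f g) ^ 2) from
          (Real.sqrt_sq hc0).symm]
      apply Real.sqrt_le_sqrt
      have h8 : (2 * Real.sqrt 2 * GammaTilde E f g) ^ 2
          = 8 * GammaTilde E f g ^ 2 := by
        rw [mul_pow, mul_pow, ht2]; ring
      rw [h8]
      nlinarith [mul_le_mul hA2 hA2 hA0 (by linarith : (0:ℝ) ≤ 2 * GammaTilde E f g),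
        mul_le_mul hB1 hB1 hB0 hG0, sq_nonneg (GammaTilde E f g)]
    have ht0 : (0:ℝ) ≤ Real.sqrt 2 := Real.sqrt_nonneg 2
    nlinarith [mul_nonneg ht0 hG0]
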